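/- Let u ∈ C([0,T]; Ḣ^{1/2}(ℝ³)), 0 < T < ∞. For every sufficiently small ε > 0 there exists l₀ > 0 such that for all t ∈ [0,T] and all λ = 2^{2^{2^l}} with l ≥ l₀, the rescaled function x ↦ λ u(t, λx) satisfies ‖λ u(t, λ·)‖_{X₁} ≤ ε. -/

import Mathlib

open MeasureTheory Real ENNReal
open scoped FourierTransform Classical RealInnerProductSpace

noncomputable section

abbrev E3 := EuclideanSpace ℝ (Fin 3)

def annulus (j : ℤ) : Set E3 := {ξ : E3 | (2:ℝ)^(j-1) ≤ ‖ξ‖ ∧ ‖ξ‖ < (2:ℝ)^j}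

def sparse (j : ℤ) : Prop :=
  ∃ k : ℕ, 1 ≤ k ∧ ∃ i : ℤ, -(k:ℤ) ≤ i ∧ i ≤ (k:ℤ) ∧ j = i + 2 ^ (2 ^ k)

noncomputable def aSeq (j : ℤ) : ℝ := if sparse j then Real.logb 2 (j:ℝ) else 1

def blockNormSq (v : E3 → ℂ) (j : ℤ) : ℝ≥0∞ :=
  ∫⁻ ξ in annulus j, (‖𝓕 v ξ‖₊ : ℝ≥0∞) ^ 2

/-- `‖v‖²_{X₁} = Σ_{j∈ℤ} 2^j a(j)^{-2} ‖Δ_j v‖²_{L²}`. -/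
def X1normSq (v : E3 → ℂ) : ℝ≥0∞ :=
  ∑' j : ℤ, (2:ℝ≥0∞) ^ j * (ENNReal.ofReal (aSeq j))⁻¹ ^ 2 * blockNormSq v j

/-- Squared `Ḣ^{1/2}` distance between two functions. -/
def HhalfDistSq (v w : E3 → ℂ) : ℝ≥0∞ :=
  ∫⁻ ξ : E3, (‖ξ‖₊ : ℝ≥0∞) * (‖𝓕 v ξ - 𝓕 w ξ‖₊ : ℝ≥0∞) ^ 2

lemma two_zpow_ofReal (j : ℤ) : ENNReal.ofReal ((2:ℝ)^j) = (2:ℝ≥0∞)^j := by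
  cases j with
  | ofNat n => simp [ENNReal.ofReal_pow]
  | negSucc n =>
      rw [zpow_negSucc, zpow_negSucc, ENNReal.ofReal_inv_of_pos (by positivity),
        ENNReal.ofReal_pow (by norm_num)]
      norm_num

lemma annulus_meas (j : ℤ) : MeasurableSet (annulus j) := by
  have h1 : MeasurableSet {ξ : E3 | (2:ℝ)^(j-1) ≤ ‖ξ‖} :=
    measurableSet_le measurable_const measurable_norm
  have h2 : MeasurableSet {ξ : E3 | ‖ξ‖ < (2:ℝ)^j} :=
    measurableSet_lt measurable_norm measurable_const
  exact (h1.inter h2)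

lemma annulus_disj : Pairwise (Function.onFun Disjoint annulus) := by
  intro i j hij
  wlog h : i < j generalizing i j
  · exact (this hij.symm (by omega)).symm
  refine Set.disjoint_left.2 fun ξ hi hj => ?_
  have : (2:ℝ)^i ≤ (2:ℝ)^(j-1) := by
    apply zpow_le_zpow_right₀ (by norm_num) (by omega)
  linarith [hi.2, hj.1]

lemma fourier_meas (v : E3 → ℂ) : Measurable (𝓕 v) := by
  by_cases hv : Integrable v volume
  · exact (VectorFourier.fourierIntegral_continuous Real.continuous_fourierChar
      (by exact continuous_inner) hv).measurable
  · have h : ∀ w : E3, 𝓕 v w = 0 := by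
      intro w
      apply integral_undef
      intro h
      exact hv ((Real.fourierIntegral_convergent_iff w).1 h)
    have : 𝓕 v = fun _ => 0 := funext h
    rw [this]; exact measurable_const

lemma fourierZero : 𝓕 (0 : E3 → ℂ) = 0 := by
  ext w
  simp [Real.fourier_eq]

lemma fourier_scale (v : E3 → ℂ) (r : ℝ) (hr : 0 < r) (ξ : E3) :
    𝓕 (fun x => (r : ℂ) * v (r • x)) ξ = ((r ^ 3)⁻¹ * r : ℝ) • 𝓕 v (r⁻¹ • ξ) := by
  have h1 : 𝓕 (fun x => (r : ℂ) * v (r • x)) ξ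
      = r • ∫ x : E3, 𝐞 (-⟪x, ξ⟫) • v (r • x) := by
    rw [Real.fourier_eq, ← integral_smul]
    congr 1; ext x
    simp only [Circle.smul_def, Complex.real_smul, smul_eq_mul]
    ring
  have h2 : (fun x : E3 => 𝐞 (-⟪x, ξ⟫) • v (r • x))
      = fun x : E3 => (fun y : E3 => 𝐞 (-⟪y, r⁻¹ • ξ⟫) • v y) (r • x) := by
    ext x
    congr 2
    rw [real_inner_smul_left, real_inner_smul_right, ← mul_assoc, mul_inv_cancel₀ hr.ne',
      one_mul]
  have h3 : ∫ x : E3, 𝐞 (-⟪x, ξ⟫) • v (r • x)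
      = |(r ^ Module.finrank ℝ E3)⁻¹| • ∫ y : E3, 𝐞 (-⟪y, r⁻¹ • ξ⟫) • v y := by
    rw [h2]
    exact MeasureTheory.Measure.integral_comp_smul volume (fun y : E3 => 𝐞 (-⟪y, r⁻¹ • ξ⟫) • v y) r
  rw [h1, h3, Real.fourier_eq]
  have : Module.finrank ℝ E3 = 3 := by simp [finrank_euclideanSpace]
  rw [this, smul_smul, abs_of_pos (by positivity)]
  ring_nf

lemma annulus_preimage (M : ℕ) (j : ℤ) :
    (fun x : E3 => ((2:ℝ)^M) • x) ⁻¹' annulus j = annulus (j - M) := by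
  ext x
  have h2M : (0:ℝ) < 2^M := by positivity
  have hdiv : ∀ a : ℤ, (2:ℝ)^a / 2^M = 2^(a - M) := by
    intro a
    rw [← zpow_natCast (2:ℝ) M, ← zpow_sub₀ (by norm_num)]
  have key : ∀ a : ℤ, ((2:ℝ)^a ≤ 2^M * ‖x‖ ↔ 2^(a - M) ≤ ‖x‖) := by
    intro a
    rw [← hdiv a, div_le_iff₀ h2M, mul_comm]
  have key2 : ∀ a : ℤ, ((2:ℝ)^M * ‖x‖ < 2^a ↔ ‖x‖ < 2^(a - M)) := by
    intro a
    rw [← hdiv a, lt_div_iff₀ h2M, mul_comm]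
  simp only [annulus, Set.mem_preimage, Set.mem_setOf_eq, norm_smul, Real.norm_eq_abs,
    abs_of_pos h2M]
  rw [key (j-1), key2 j]
  have : j - 1 - (M:ℤ) = j - M - 1 := by ring
  rw [this]

lemma setLIntegral_scale (F : E3 → ℝ≥0∞) (r : ℝ) (hr : 0 < r) (s : Set E3)
    (hs : MeasurableSet s) :
    ∫⁻ ξ in s, F (r⁻¹ • ξ) = ENNReal.ofReal (r^3) * ∫⁻ x in (fun x : E3 => r • x) ⁻¹' s, F x := by
  set e : E3 ≃ᵐ E3 := MeasurableEquiv.smul₀ r hr.ne' with he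
  have hco : ⇑e = (fun x : E3 => r • x) := MeasurableEquiv.coe_smul₀ hr.ne'
  have hrank : Module.finrank ℝ E3 = 3 := by simp [finrank_euclideanSpace]
  have hmap : volume.map ⇑e = ENNReal.ofReal |((r:ℝ)^3)⁻¹| • volume := by
    rw [hco]
    have := MeasureTheory.Measure.map_addHaar_smul (volume : Measure E3) hr.ne'
    rw [hrank] at this
    exact this
  have key := MeasureTheory.lintegral_map_equiv
    (μ := volume.restrict ((fun x : E3 => r • x) ⁻¹' s)) (fun ξ => F (r⁻¹ • ξ)) e
  have hre : e ⁻¹' s = (fun x : E3 => r • x) ⁻¹' s := by rw [hco]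
  have hmm : (volume.restrict ((fun x : E3 => r • x) ⁻¹' s)).map ⇑e
      = ENNReal.ofReal |((r:ℝ)^3)⁻¹| • volume.restrict s := by
    rw [← hre, ← Measure.restrict_map e.measurable hs, hmap, Measure.restrict_smul]
  have hcomp : ∀ x : E3, F (r⁻¹ • (e x)) = F x := by
    intro x
    rw [hco]
    simp only []
    rw [smul_smul, inv_mul_cancel₀ hr.ne', one_smul]
  rw [hmm, lintegral_smul_measure] at key
  simp only [hcomp] at key
  have hc1 : ENNReal.ofReal (r^3) * ENNReal.ofReal |((r:ℝ)^3)⁻¹| = 1 := by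
    rw [abs_of_pos (by positivity), ← ENNReal.ofReal_mul (by positivity),
      mul_inv_cancel₀ (by positivity)]
    exact ENNReal.ofReal_one
  calc ∫⁻ ξ in s, F (r⁻¹ • ξ)
      = 1 * ∫⁻ ξ in s, F (r⁻¹ • ξ) := (one_mul _).symm
    _ = ENNReal.ofReal (r^3) * (ENNReal.ofReal |((r:ℝ)^3)⁻¹| * ∫⁻ ξ in s, F (r⁻¹ • ξ)) := by
        rw [← mul_assoc, hc1]
    _ = ENNReal.ofReal (r^3) * ∫⁻ x in (fun x : E3 => r • x) ⁻¹' s, F x := by rw [← key, smul_eq_mul]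

lemma blockNormSq_scale (v : E3 → ℂ) (M : ℕ) (j : ℤ) :
    blockNormSq (fun x => (((2:ℝ)^M : ℝ) : ℂ) * v (((2:ℝ)^M) • x)) j
      = ENNReal.ofReal (((2:ℝ)^M)⁻¹) * blockNormSq v (j - M) := by
  set r : ℝ := (2:ℝ)^M with hrdef
  have hr : 0 < r := by positivity
  have hpt : ∀ ξ : E3,
      ((‖𝓕 (fun x => (r:ℂ) * v (r • x)) ξ‖₊ : ℝ≥0∞))^2
        = ENNReal.ofReal (((r^3)⁻¹*r)^2) * ((‖𝓕 v (r⁻¹ • ξ)‖₊ : ℝ≥0∞))^2 := by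
    intro ξ
    rw [fourier_scale v r hr ξ, nnnorm_smul]
    rw [ENNReal.coe_mul, mul_pow]
    congr 1
    rw [← enorm_eq_nnnorm, Real.enorm_eq_ofReal (by positivity), ← ENNReal.ofReal_pow (by positivity)]
  have : blockNormSq (fun x => (r:ℂ) * v (r • x)) j
      = ENNReal.ofReal (((r^3)⁻¹*r)^2) * ∫⁻ ξ in annulus j, ((‖𝓕 v (r⁻¹ • ξ)‖₊ : ℝ≥0∞))^2 := by
    rw [blockNormSq]
    simp_rw [hpt]
    rw [lintegral_const_mul' _ _ ENNReal.ofReal_ne_top]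
  rw [this, setLIntegral_scale (fun ξ => ((‖𝓕 v ξ‖₊ : ℝ≥0∞))^2) r hr _ (annulus_meas j),
    annulus_preimage M j, ← mul_assoc]
  congr 1
  rw [← ENNReal.ofReal_mul (by positivity)]
  congr 1
  field_simp

def Cdiff (v w : E3 → ℂ) (j : ℤ) : ℝ≥0∞ :=
  ∫⁻ ξ in annulus j, (‖ξ‖₊ : ℝ≥0∞) * (‖𝓕 v ξ - 𝓕 w ξ‖₊ : ℝ≥0∞) ^ 2

def TailSum (l : ℕ) (v : E3 → ℂ) : ℝ≥0∞ :=
  ∑' j : ℤ, if l < j.natAbs then Cdiff v 0 j else 0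

lemma tsum_Cdiff_le (v w : E3 → ℂ) : ∑' j : ℤ, Cdiff v w j ≤ HhalfDistSq v w := by
  rw [HhalfDistSq]
  have h := MeasureTheory.lintegral_iUnion (μ := (volume : Measure E3)) annulus_meas annulus_disj
    (fun ξ => (‖ξ‖₊ : ℝ≥0∞) * (‖𝓕 v ξ - 𝓕 w ξ‖₊ : ℝ≥0∞) ^ 2)
  calc ∑' j : ℤ, Cdiff v w j
      = ∫⁻ ξ in ⋃ j, annulus j, (‖ξ‖₊ : ℝ≥0∞) * (‖𝓕 v ξ - 𝓕 w ξ‖₊ : ℝ≥0∞) ^ 2 := h.symm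
    _ ≤ ∫⁻ ξ : E3, (‖ξ‖₊ : ℝ≥0∞) * (‖𝓕 v ξ - 𝓕 w ξ‖₊ : ℝ≥0∞) ^ 2 :=
        setLIntegral_le_lintegral _ _

lemma zpow_ne_top (j : ℤ) : (2:ℝ≥0∞)^j ≠ ⊤ := by
  rw [← two_zpow_ofReal]
  exact ENNReal.ofReal_ne_top

lemma block_le_Cdiff (v : E3 → ℂ) (j : ℤ) :
    (2:ℝ≥0∞)^j * blockNormSq v j ≤ 2 * Cdiff v 0 j := by
  rw [blockNormSq, Cdiff, ← lintegral_const_mul' _ _ (zpow_ne_top j),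
    ← lintegral_const_mul' _ _ (by norm_num : (2:ℝ≥0∞) ≠ ⊤)]
  apply setLIntegral_mono' (annulus_meas j)
  intro ξ hξ
  have h1 : (2:ℝ≥0∞)^(j-1) ≤ (‖ξ‖₊ : ℝ≥0∞) := by
    rw [← two_zpow_ofReal, ← enorm_eq_nnnorm, ← ofReal_norm]
    exact ENNReal.ofReal_le_ofReal hξ.1
  have h2 : (2:ℝ≥0∞)^j ≤ 2 * (‖ξ‖₊ : ℝ≥0∞) := by
    calc (2:ℝ≥0∞)^j = 2^(1:ℤ) * 2^(j-1) := by
          rw [← ENNReal.zpow_add (by norm_num) (by norm_num) 1 (j-1)]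
          norm_num
      _ = 2 * 2^(j-1) := by rw [zpow_one]
      _ ≤ 2 * (‖ξ‖₊ : ℝ≥0∞) := by gcongr
  have h3 : ‖𝓕 v ξ - 𝓕 (0 : E3 → ℂ) ξ‖₊ = ‖𝓕 v ξ‖₊ := by rw [fourierZero]; simp
  rw [h3]
  calc (2:ℝ≥0∞)^j * (‖𝓕 v ξ‖₊ : ℝ≥0∞)^2 ≤ (2 * (‖ξ‖₊ : ℝ≥0∞)) * (‖𝓕 v ξ‖₊ : ℝ≥0∞)^2 := by
        gcongr
    _ = 2 * ((‖ξ‖₊ : ℝ≥0∞) * (‖𝓕 v ξ‖₊ : ℝ≥0∞)^2) := by ring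

lemma sq_tri (a b : ℂ) : (‖a‖₊ : ℝ≥0∞)^2 ≤ 2*(‖a-b‖₊ : ℝ≥0∞)^2 + 2*(‖b‖₊ : ℝ≥0∞)^2 := by
  have key : ‖a‖^2 ≤ 2*‖a-b‖^2 + 2*‖b‖^2 := by
    have h : ‖a‖ ≤ ‖a-b‖ + ‖b‖ := by
      calc ‖a‖ = ‖a-b+b‖ := by rw [sub_add_cancel]
        _ ≤ ‖a-b‖ + ‖b‖ := norm_add_le _ _
    nlinarith [norm_nonneg (a-b), norm_nonneg b, norm_nonneg a, sq_nonneg (‖a-b‖ - ‖b‖)]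
  have conv : ∀ c : ℂ, (‖c‖₊ : ℝ≥0∞)^2 = ENNReal.ofReal (‖c‖^2) := by
    intro c
    rw [← enorm_eq_nnnorm, ← ofReal_norm, ← ENNReal.ofReal_pow (norm_nonneg c)]
  rw [conv, conv, conv]
  calc ENNReal.ofReal (‖a‖^2) ≤ ENNReal.ofReal (2*‖a-b‖^2 + 2*‖b‖^2) :=
        ENNReal.ofReal_le_ofReal key
    _ = ENNReal.ofReal (2*‖a-b‖^2) + ENNReal.ofReal (2*‖b‖^2) := by
        rw [ENNReal.ofReal_add (by positivity) (by positivity)]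
    _ = 2*ENNReal.ofReal (‖a-b‖^2) + 2*ENNReal.ofReal (‖b‖^2) := by
        rw [ENNReal.ofReal_mul (by norm_num), ENNReal.ofReal_mul (by norm_num)]
        norm_num

lemma Cdiff_tri (v w : E3 → ℂ) (j : ℤ) :
    Cdiff v 0 j ≤ 2 * Cdiff v w j + 2 * Cdiff w 0 j := by
  rw [Cdiff, Cdiff, Cdiff,
    ← lintegral_const_mul' _ _ (by norm_num : (2:ℝ≥0∞) ≠ ⊤),
    ← lintegral_const_mul' _ _ (by norm_num : (2:ℝ≥0∞) ≠ ⊤)]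
  have hmeas : Measurable (fun ξ : E3 =>
      2 * ((‖ξ‖₊ : ℝ≥0∞) * (‖𝓕 v ξ - 𝓕 w ξ‖₊ : ℝ≥0∞) ^ 2)) := by
    apply Measurable.const_mul
    exact (measurable_nnnorm.coe_nnreal_ennreal.mul
      ((((fourier_meas v).sub (fourier_meas w)).nnnorm.coe_nnreal_ennreal).pow_const 2))
  rw [← lintegral_add_left hmeas]
  apply setLIntegral_mono' (annulus_meas j)
  intro ξ _
  have h3 : ∀ z : ℂ, 𝓕 (0 : E3 → ℂ) ξ = 0 := by intro z; rw [fourierZero]; rfl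
  rw [show 𝓕 (0 : E3 → ℂ) ξ = 0 from by rw [fourierZero]; rfl, sub_zero, sub_zero]
  calc (‖ξ‖₊ : ℝ≥0∞) * (‖𝓕 v ξ‖₊ : ℝ≥0∞)^2
      ≤ (‖ξ‖₊ : ℝ≥0∞) * (2*(‖𝓕 v ξ - 𝓕 w ξ‖₊ : ℝ≥0∞)^2 + 2*(‖𝓕 w ξ‖₊ : ℝ≥0∞)^2) := by
        gcongr
        exact sq_tri _ _
    _ = 2 * ((‖ξ‖₊ : ℝ≥0∞) * (‖𝓕 v ξ - 𝓕 w ξ‖₊ : ℝ≥0∞)^2)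
        + 2 * ((‖ξ‖₊ : ℝ≥0∞) * (‖𝓕 w ξ‖₊ : ℝ≥0∞)^2) := by ring

lemma nat_aux (k : ℕ) (hk : 1 ≤ k) : k + 2 ≤ 2^(2^k) := by
  have h1 : k + 1 ≤ 2^k := Nat.lt_two_pow_self (n := k)
  have h2 : 2^(k+1) ≤ 2^(2^k) := Nat.pow_le_pow_right (by norm_num) h1
  have h3 : 2^(k+1) = 2*2^k := by rw [pow_succ]; ring
  omega

lemma aSeq_ge_one (j : ℤ) : 1 ≤ aSeq j := by
  rw [aSeq]
  split
  · rename_i hsp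
    obtain ⟨k, hk, i, hik, hik2, rfl⟩ := hsp
    have hn : (k:ℝ) + 2 ≤ 2^(2^k) := by exact_mod_cast Nat.cast_le.2 (nat_aux k hk)
    have hi : -(k:ℝ) ≤ (i:ℝ) := by exact_mod_cast hik
    have h2 : (2:ℝ) ≤ ((i + 2^(2^k) : ℤ) : ℝ) := by push_cast; linarith
    calc (1:ℝ) = Real.logb 2 2 := (Real.logb_self_eq_one (by norm_num)).symm
      _ ≤ Real.logb 2 _ := Real.logb_le_logb_of_le (by norm_num) (by norm_num) h2
  · exact le_refl 1

lemma W_le_one (j : ℤ) : ((ENNReal.ofReal (aSeq j))⁻¹)^2 ≤ 1 := by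
  apply pow_le_one₀ zero_le
  rw [ENNReal.inv_le_one]
  exact ENNReal.one_le_ofReal.2 (aSeq_ge_one j)

lemma W_mid (l : ℕ) (hl : 1 ≤ l) (j : ℤ) (hj : j.natAbs ≤ l) :
    ((ENNReal.ofReal (aSeq (j + ((2^(2^l) : ℕ) : ℤ))))⁻¹)^2 ≤ 4 * ((4:ℝ≥0∞)^l)⁻¹ := by
  have hsp : sparse (j + ((2^(2^l) : ℕ) : ℤ)) := by
    refine ⟨l, hl, j, by omega, by omega, by push_cast; ring⟩
  -- real bound : 2^(l-1) ≤ aSeq _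
  have hhalf : ((2:ℝ)^(l-1) : ℝ) ≤ aSeq (j + ((2^(2^l) : ℕ) : ℤ)) := by
    rw [aSeq, if_pos hsp]
    have hXge : ((2:ℝ))^((2^l - 1 : ℕ)) ≤ ((j + ((2^(2^l) : ℕ) : ℤ) : ℤ) : ℝ) := by
      have hj' : -(l:ℝ) ≤ (j:ℝ) := by
        have : -(l:ℤ) ≤ j := by omega
        exact_mod_cast this
      have hnat : 2^(2^l - 1) + l ≤ 2^(2^l) := by
        have h1 : l ≤ 2^l - 1 := by
          have := Nat.lt_two_pow_self (n := l)
          omega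
        have h2 : 2^l = (2^l - 1) + 1 := by
          have := Nat.one_le_two_pow (n := l)
          omega
        have h3 : 2^(2^l) = 2 * 2^(2^l - 1) := by
          conv_lhs => rw [h2]
          rw [pow_succ]; ring
        have h4 : l ≤ 2^(2^l - 1) := by
          calc l ≤ 2^l - 1 := h1
            _ ≤ 2^(2^l - 1) := by
              have := Nat.lt_two_pow_self (n := 2^l - 1)
              omega
        omega
      have hr : ((2:ℝ))^((2^l - 1 : ℕ)) + l ≤ (2:ℝ)^(2^l) := by exact_mod_cast hnat
      push_cast
      linarith
    calc ((2:ℝ)^(l-1) : ℝ) ≤ ((2^l - 1 : ℕ) : ℝ) := by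
          have : 2^(l-1) ≤ 2^l - 1 := by
            have h2 : 2^l = 2 * 2^(l-1) := by
              conv_lhs => rw [show l = (l-1)+1 by omega]
              rw [pow_succ]; ring
            have := Nat.one_le_two_pow (n := l - 1)
            omega
          exact_mod_cast this
      _ = Real.logb 2 ((2:ℝ)^((2^l - 1 : ℕ))) := by
          rw [Real.logb_pow, Real.logb_self_eq_one (by norm_num)]
          · ring
      _ ≤ _ := by
          apply Real.logb_le_logb_of_le (by norm_num) (by positivity) hXge
  -- conclude in ℝ≥0∞
  have h1 : ((2:ℝ≥0∞)^(l-1)) ≤ ENNReal.ofReal (aSeq (j + ((2^(2^l) : ℕ) : ℤ))) := by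
    calc ((2:ℝ≥0∞)^(l-1)) = ENNReal.ofReal ((2:ℝ)^(l-1)) := by
          rw [ENNReal.ofReal_pow (by norm_num)]
          norm_num
      _ ≤ _ := ENNReal.ofReal_le_ofReal hhalf
  have h2 : ((ENNReal.ofReal (aSeq (j + ((2^(2^l) : ℕ) : ℤ))))⁻¹)^2 ≤ (((2:ℝ≥0∞)^(l-1))⁻¹)^2 := by
    gcongr
  refine h2.trans ?_
  have h3 : (((2:ℝ≥0∞)^(l-1))⁻¹)^2 = ((4:ℝ≥0∞)^(l-1))⁻¹ := by
    rw [← ENNReal.inv_pow, ← pow_mul]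
    have : (4:ℝ≥0∞) = 2^2 := by norm_num
    rw [this, ← pow_mul]
    ring_nf
  rw [h3]
  have h4 : (4:ℝ≥0∞)^l = 4 * 4^(l-1) := by
    conv_lhs => rw [show l = (l-1)+1 by omega]
    rw [pow_succ]; ring
  rw [h4, ENNReal.mul_inv (by norm_num) (by norm_num), ← mul_assoc,
    ENNReal.mul_inv_cancel (by norm_num) (by norm_num), one_mul]

lemma X1_scaled (v : E3 → ℂ) (M : ℕ) :
    X1normSq (fun x => (((2:ℝ)^M : ℝ) : ℂ) * v (((2:ℝ)^M) • x))
      = ∑' j : ℤ, (2:ℝ≥0∞)^j * (ENNReal.ofReal (aSeq (j + (M:ℤ))))⁻¹^2 * blockNormSq v j := by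
  rw [X1normSq]
  have hterm : ∀ j : ℤ,
      (2:ℝ≥0∞)^j * (ENNReal.ofReal (aSeq j))⁻¹^2
          * blockNormSq (fun x => (((2:ℝ)^M : ℝ) : ℂ) * v (((2:ℝ)^M) • x)) j
        = (fun j' : ℤ => (2:ℝ≥0∞)^j' * (ENNReal.ofReal (aSeq (j' + (M:ℤ))))⁻¹^2
            * blockNormSq v j') (j - (M:ℤ)) := by
    intro j
    simp only []
    rw [blockNormSq_scale]
    have hc : ENNReal.ofReal (((2:ℝ)^M)⁻¹) = (2:ℝ≥0∞)^(-(M:ℤ)) := by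
      rw [← two_zpow_ofReal (-(M:ℤ))]
      congr 1
      rw [zpow_neg, zpow_natCast]
    rw [hc]
    have hz : (2:ℝ≥0∞)^j * (2:ℝ≥0∞)^(-(M:ℤ)) = (2:ℝ≥0∞)^(j - (M:ℤ)) := by
      rw [← ENNReal.zpow_add (by norm_num) (by norm_num), sub_eq_add_neg]
    have hind : j - (M:ℤ) + (M:ℤ) = j := by ring
    rw [hind, ← hz]
    ring
  calc ∑' j : ℤ, (2:ℝ≥0∞)^j * (ENNReal.ofReal (aSeq j))⁻¹^2
          * blockNormSq (fun x => (((2:ℝ)^M : ℝ) : ℂ) * v (((2:ℝ)^M) • x)) j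
      = ∑' j : ℤ, (fun j' : ℤ => (2:ℝ≥0∞)^j' * (ENNReal.ofReal (aSeq (j' + (M:ℤ))))⁻¹^2
            * blockNormSq v j') ((Equiv.subRight (M:ℤ)) j) := by
        apply tsum_congr
        intro j
        rw [hterm j]
        rfl
    _ = _ := (Equiv.subRight (M:ℤ)).tsum_eq
        (fun j' : ℤ => (2:ℝ≥0∞)^j' * (ENNReal.ofReal (aSeq (j' + (M:ℤ))))⁻¹^2
            * blockNormSq v j')

lemma main_split (v : E3 → ℂ) (l : ℕ) (hl : 1 ≤ l) :
    (∑' j : ℤ, (2:ℝ≥0∞)^j * (ENNReal.ofReal (aSeq (j + ((2^(2^l) : ℕ) : ℤ))))⁻¹^2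
        * blockNormSq v j)
      ≤ 8 * ((4:ℝ≥0∞)^l)⁻¹ * (∑' j : ℤ, Cdiff v 0 j) + 2 * TailSum l v := by
  have hterm : ∀ j : ℤ,
      (2:ℝ≥0∞)^j * (ENNReal.ofReal (aSeq (j + ((2^(2^l) : ℕ) : ℤ))))⁻¹^2 * blockNormSq v j
        ≤ 8 * ((4:ℝ≥0∞)^l)⁻¹ * Cdiff v 0 j
          + 2 * (if l < j.natAbs then Cdiff v 0 j else 0) := by
    intro j
    by_cases hj : j.natAbs ≤ l
    · have hW := W_mid l hl j hj
      calc (2:ℝ≥0∞)^j * (ENNReal.ofReal (aSeq (j + ((2^(2^l) : ℕ) : ℤ))))⁻¹^2 * blockNormSq v j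
          = (ENNReal.ofReal (aSeq (j + ((2^(2^l) : ℕ) : ℤ))))⁻¹^2 * ((2:ℝ≥0∞)^j * blockNormSq v j) := by
            ring
        _ ≤ (4 * ((4:ℝ≥0∞)^l)⁻¹) * (2 * Cdiff v 0 j) :=
            mul_le_mul' hW (block_le_Cdiff v j)
        _ = 8 * ((4:ℝ≥0∞)^l)⁻¹ * Cdiff v 0 j := by ring
        _ ≤ _ := le_self_add
    · push_neg at hj
      calc (2:ℝ≥0∞)^j * (ENNReal.ofReal (aSeq (j + ((2^(2^l) : ℕ) : ℤ))))⁻¹^2 * blockNormSq v j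
          = (ENNReal.ofReal (aSeq (j + ((2^(2^l) : ℕ) : ℤ))))⁻¹^2 * ((2:ℝ≥0∞)^j * blockNormSq v j) := by
            ring
        _ ≤ 1 * (2 * Cdiff v 0 j) := mul_le_mul' (W_le_one _) (block_le_Cdiff v j)
        _ = 2 * (if l < j.natAbs then Cdiff v 0 j else 0) := by rw [if_pos hj]; ring
        _ ≤ _ := le_add_self
  calc (∑' j : ℤ, (2:ℝ≥0∞)^j * (ENNReal.ofReal (aSeq (j + ((2^(2^l) : ℕ) : ℤ))))⁻¹^2
        * blockNormSq v j)
      ≤ ∑' j : ℤ, (8 * ((4:ℝ≥0∞)^l)⁻¹ * Cdiff v 0 j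
          + 2 * (if l < j.natAbs then Cdiff v 0 j else 0)) := ENNReal.tsum_le_tsum hterm
    _ = 8 * ((4:ℝ≥0∞)^l)⁻¹ * (∑' j : ℤ, Cdiff v 0 j) + 2 * TailSum l v := by
        rw [ENNReal.tsum_add, ENNReal.tsum_mul_left, ENNReal.tsum_mul_left]
        rfl

lemma TailSum_antitone (v : E3 → ℂ) {l l' : ℕ} (h : l ≤ l') : TailSum l' v ≤ TailSum l v := by
  apply ENNReal.tsum_le_tsum
  intro j
  by_cases hj : l' < j.natAbs
  · rw [if_pos hj, if_pos (by omega)]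
  · rw [if_neg hj]
    exact zero_le

lemma TailSum_tri (v w : E3 → ℂ) (l : ℕ) :
    TailSum l v ≤ 2 * HhalfDistSq v w + 2 * TailSum l w := by
  calc TailSum l v
      ≤ ∑' j : ℤ, (2 * Cdiff v w j + 2 * (if l < j.natAbs then Cdiff w 0 j else 0)) := by
        apply ENNReal.tsum_le_tsum
        intro j
        by_cases hj : l < j.natAbs
        · rw [if_pos hj, if_pos hj]
          exact Cdiff_tri v w j
        · rw [if_neg hj]
          exact zero_le
    _ = 2 * (∑' j : ℤ, Cdiff v w j) + 2 * TailSum l w := by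
        rw [ENNReal.tsum_add, ENNReal.tsum_mul_left, ENNReal.tsum_mul_left]
        rfl
    _ ≤ 2 * HhalfDistSq v w + 2 * TailSum l w := by
        gcongr
        exact tsum_Cdiff_le v w

lemma sumC_tri (v w : E3 → ℂ) :
    (∑' j : ℤ, Cdiff v 0 j) ≤ 2 * HhalfDistSq v w + 2 * (∑' j : ℤ, Cdiff w 0 j) := by
  calc (∑' j : ℤ, Cdiff v 0 j)
      ≤ ∑' j : ℤ, (2 * Cdiff v w j + 2 * Cdiff w 0 j) :=
        ENNReal.tsum_le_tsum (fun j => Cdiff_tri v w j)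
    _ = 2 * (∑' j : ℤ, Cdiff v w j) + 2 * (∑' j : ℤ, Cdiff w 0 j) := by
        rw [ENNReal.tsum_add, ENNReal.tsum_mul_left, ENNReal.tsum_mul_left]
    _ ≤ _ := by
        gcongr
        exact tsum_Cdiff_le v w

lemma tail_exists (w : E3 → ℂ) (h : HhalfDistSq w 0 ≠ ⊤) (c : ℝ≥0∞) (hc : 0 < c) :
    ∃ N : ℕ, TailSum N w ≤ c := by
  have htot : (∑' j : ℤ, Cdiff w 0 j) ≠ ⊤ :=
    ((tsum_Cdiff_le w 0).trans_lt (lt_top_iff_ne_top.2 h)).ne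
  have htend := ENNReal.tendsto_tsum_compl_atTop_zero htot
  have hev : ∀ᶠ s : Finset ℤ in Filter.atTop, (∑' j : {x : ℤ // x ∉ s}, Cdiff w 0 j) < c :=
    htend.eventually_lt_const hc
  obtain ⟨s, hs⟩ := hev.exists
  refine ⟨s.sup (fun j => j.natAbs), ?_⟩
  have heq : (∑' j : {x : ℤ // x ∉ s}, Cdiff w 0 j)
      = ∑' j : ℤ, Set.indicator {x : ℤ | x ∉ s} (Cdiff w 0) j :=
    tsum_subtype {x : ℤ | x ∉ s} (Cdiff w 0)
  have h2 : TailSum (s.sup (fun j => j.natAbs)) w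
      ≤ ∑' j : ℤ, Set.indicator {x : ℤ | x ∉ s} (Cdiff w 0) j := by
    apply ENNReal.tsum_le_tsum
    intro j
    by_cases hj : s.sup (fun j => j.natAbs) < j.natAbs
    · rw [if_pos hj]
      have hjs : j ∉ s := by
        intro hmem
        have hle := Finset.le_sup (f := fun j : ℤ => j.natAbs) hmem
        omega
      rw [Set.indicator_of_mem (by simpa using hjs)]
    · rw [if_neg hj]
      exact zero_le
  exact (h2.trans_eq heq.symm).trans hs.le

lemma pow_exists (c : ℝ≥0∞) (hc : 0 < c) (hc' : c ≠ ⊤) (E : ℝ≥0∞) (hE : E ≠ ⊤) :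
    ∃ N : ℕ, ∀ l : ℕ, N ≤ l → 16 * E ≤ 4^l * c := by
  obtain ⟨n, hn⟩ := ENNReal.exists_nat_gt
    (show 16 * E / c ≠ ⊤ from (ENNReal.div_lt_top (by finiteness) hc.ne').ne)
  refine ⟨n, fun l hl => ?_⟩
  have h1 : 16 * E ≤ n * c := by
    rw [ENNReal.div_lt_iff (Or.inl hc.ne') (Or.inl hc')] at hn
    exact hn.le
  refine h1.trans ?_
  gcongr
  calc (n : ℝ≥0∞) ≤ ((4^n : ℕ) : ℝ≥0∞) := by
        exact_mod_cast Nat.cast_le.2 (Nat.lt_pow_self (n := n) (by norm_num : 1 < 4)).le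
    _ = (4:ℝ≥0∞)^n := by push_cast; rfl
    _ ≤ (4:ℝ≥0∞)^l := pow_le_pow_right₀ (by norm_num) hl


/-- let `u ∈ C([0,T]; Ḣ^{1/2}(ℝ³))`, `0 < T < ∞`. For every sufficiently
small `ε > 0` there exists `l₀ > 0` such that for all `t ∈ [0,T]` and all
`λ = 2^(2^(2^l))` with `l ≥ l₀`, one has `‖λ u(t, λ·)‖_{X₁} ≤ ε`. -/
theorem stmt13 (T : ℝ) (hT : 0 < T) (u : ℝ → E3 → ℂ)
    (hfin : ∀ t ∈ Set.Icc 0 T, HhalfDistSq (u t) 0 < ⊤)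
    (hcont : ∀ t ∈ Set.Icc 0 T, ∀ δ : ℝ, 0 < δ → ∃ η : ℝ, 0 < η ∧
      ∀ t' ∈ Set.Icc 0 T, |t' - t| < η → HhalfDistSq (u t') (u t) ≤ ENNReal.ofReal (δ ^ 2)) :
    ∃ ε₀ : ℝ, 0 < ε₀ ∧ ∀ ε : ℝ, 0 < ε → ε ≤ ε₀ → ∃ l₀ : ℕ, 0 < l₀ ∧
      ∀ t ∈ Set.Icc 0 T, ∀ l : ℕ, l₀ ≤ l →
        X1normSq (fun x : E3 =>
            (((2:ℝ) ^ (2 ^ (2 ^ l)) : ℝ) : ℂ) * u t (((2:ℝ) ^ (2 ^ (2 ^ l)) : ℝ) • x)) ≤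
          ENNReal.ofReal (ε ^ 2) := by
  refine ⟨1, one_pos, fun ε hε hε1 => ?_⟩
  have hδpos : 0 < ε/8 := by positivity
  have h' : ∀ s ∈ Set.Icc (0:ℝ) T, ∃ η, 0 < η ∧ ∀ t' ∈ Set.Icc (0:ℝ) T, |t' - s| < η →
      HhalfDistSq (u t') (u s) ≤ ENNReal.ofReal ((ε/8)^2) := by
    intro s hs
    obtain ⟨η, hη, hP⟩ := hcont s hs (ε/8) hδpos
    exact ⟨η, hη, hP⟩
  choose! η hη hP using h'
  have hcov : Set.Icc (0:ℝ) T ⊆ ⋃ s ∈ Set.Icc (0:ℝ) T, Metric.ball s (η s) := by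
    intro t ht
    exact Set.mem_biUnion ht (Metric.mem_ball_self (hη t ht))
  obtain ⟨S, hSsub, hSfin, hScov⟩ :=
    (isCompact_Icc (a := (0:ℝ)) (b := T)).elim_finite_subcover_image
      (fun s _ => Metric.isOpen_ball) hcov
  have hthresh : ∀ s ∈ S, ∃ N : ℕ, ∀ l : ℕ, N ≤ l →
      (16 * (∑' j : ℤ, Cdiff (u s) 0 j) ≤ 4^l * ENNReal.ofReal (ε^2/4)) ∧
      (TailSum l (u s) ≤ ENNReal.ofReal (ε^2/16)) := by
    intro s hs
    have hsK : s ∈ Set.Icc (0:ℝ) T := hSsub hs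
    have hfs : HhalfDistSq (u s) 0 ≠ ⊤ := (hfin s hsK).ne
    have htot : (∑' j : ℤ, Cdiff (u s) 0 j) ≠ ⊤ :=
      ((tsum_Cdiff_le _ _).trans_lt (hfin s hsK)).ne
    obtain ⟨N1, hN1⟩ := pow_exists (ENNReal.ofReal (ε^2/4))
      (ENNReal.ofReal_pos.2 (by positivity)) ENNReal.ofReal_ne_top _ htot
    obtain ⟨N2, hN2⟩ := tail_exists (u s) hfs (ENNReal.ofReal (ε^2/16))
      (ENNReal.ofReal_pos.2 (by positivity))
    refine ⟨max N1 N2, fun l hl => ⟨hN1 l (le_trans (le_max_left _ _) hl), ?_⟩⟩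
    exact (TailSum_antitone (u s) (le_trans (le_max_right _ _) hl)).trans hN2
  choose! N hN using hthresh
  refine ⟨hSfin.toFinset.sup N + 1, Nat.succ_pos _, ?_⟩
  intro t ht l hl
  have hl1 : 1 ≤ l := le_trans (Nat.succ_le_succ (Nat.zero_le _)) hl
  obtain ⟨s, hsS, hts⟩ := Set.mem_iUnion₂.1 (hScov ht)
  have hsK := hSsub hsS
  have hD : HhalfDistSq (u t) (u s) ≤ ENNReal.ofReal ((ε/8)^2) := by
    apply hP s hsK t ht
    rw [← Real.dist_eq]
    exact hts
  have hNl : N s ≤ l := by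
    have h1 : N s ≤ hSfin.toFinset.sup N := Finset.le_sup (hSfin.mem_toFinset.2 hsS)
    omega
  obtain ⟨hpow, htail⟩ := hN s hsS l hNl
  -- abbreviations
  set g : ℝ≥0∞ := ((4:ℝ≥0∞)^l)⁻¹ with hg
  have hg1 : g ≤ 1 := by
    rw [hg, ENNReal.inv_le_one]
    exact one_le_pow_of_one_le' (by norm_num : (1:ℝ≥0∞) ≤ 4) l
  have hginv : g * (4:ℝ≥0∞)^l = 1 :=
    ENNReal.inv_mul_cancel (by positivity) (ENNReal.pow_ne_top (by norm_num))
  set Hts := HhalfDistSq (u t) (u s) with hHts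
  set Ct := ∑' j : ℤ, Cdiff (u t) 0 j with hCt
  set Cs := ∑' j : ℤ, Cdiff (u s) 0 j with hCs
  calc X1normSq (fun x : E3 =>
            (((2:ℝ) ^ (2 ^ (2 ^ l)) : ℝ) : ℂ) * u t (((2:ℝ) ^ (2 ^ (2 ^ l)) : ℝ) • x))
      = ∑' j : ℤ, (2:ℝ≥0∞)^j * (ENNReal.ofReal (aSeq (j + ((2^(2^l) : ℕ) : ℤ))))⁻¹^2
          * blockNormSq (u t) j := X1_scaled (u t) (2^(2^l))
    _ ≤ 8 * g * Ct + 2 * TailSum l (u t) := main_split (u t) l hl1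
    _ ≤ 8 * g * (2 * Hts + 2 * Cs) + 2 * (2 * Hts + 2 * TailSum l (u s)) := by
        gcongr
        · exact sumC_tri (u t) (u s)
        · exact TailSum_tri (u t) (u s) l
    _ = 16 * g * Hts + g * (16 * Cs) + 4 * Hts + 4 * TailSum l (u s) := by ring
    _ ≤ 16 * 1 * ENNReal.ofReal ((ε/8)^2) + g * ((4:ℝ≥0∞)^l * ENNReal.ofReal (ε^2/4))
        + 4 * ENNReal.ofReal ((ε/8)^2) + 4 * ENNReal.ofReal (ε^2/16) := by
        gcongr <;> exact le_rfl
    _ = 20 * ENNReal.ofReal ((ε/8)^2) + ENNReal.ofReal (ε^2/4) + 4 * ENNReal.ofReal (ε^2/16) := by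
        rw [← mul_assoc g, hginv, one_mul]
        ring
    _ ≤ ENNReal.ofReal (ε^2/2) + ENNReal.ofReal (ε^2/4) + ENNReal.ofReal (ε^2/4) := by
        have hA : (20:ℝ≥0∞) * ENNReal.ofReal ((ε/8)^2) ≤ ENNReal.ofReal (ε^2/2) := by
          calc (20:ℝ≥0∞) * ENNReal.ofReal ((ε/8)^2)
              = ENNReal.ofReal (20 * (ε/8)^2) := by
                rw [ENNReal.ofReal_mul (by norm_num : (0:ℝ) ≤ 20)]
                simp
            _ ≤ ENNReal.ofReal (ε^2/2) := by
                apply ENNReal.ofReal_le_ofReal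
                nlinarith [sq_nonneg ε]
        have hB : (4:ℝ≥0∞) * ENNReal.ofReal (ε^2/16) ≤ ENNReal.ofReal (ε^2/4) := by
          have h4 : (4:ℝ≥0∞) * ENNReal.ofReal (ε^2/16) = ENNReal.ofReal (4 * (ε^2/16)) := by
            rw [ENNReal.ofReal_mul (by norm_num : (0:ℝ) ≤ 4)]
            simp
          rw [h4, show (4:ℝ) * (ε^2/16) = ε^2/4 by ring]
        exact add_le_add (add_le_add hA le_rfl) hB
    _ = ENNReal.ofReal (ε ^ 2) := by
        rw [← ENNReal.ofReal_add (by positivity) (by positivity),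
          ← ENNReal.ofReal_add (by positivity) (by positivity)]
        rw [show ε^2/2 + ε^2/4 + ε^2/4 = ε^2 by ring]
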